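/- Let M be a matrix of full rank type. Let S ⊆ {1,…,ν}, set n := #S and u := ∏_{i∈S} a_i. Let G′ be a nonempty finite set of squarefree monomials in the variables {a_i : i ∉ S}, let J′ be the ideal of A generated by G′, and let J be the ideal of A generated by {u·g : g ∈ G′}. Then for every integer k ≥ n: dim_ℂ (A/(J + I_M))_k = dim_ℂ (A/(J′ + I_M))_{k−n} + n. -/

import Mathlib

open scoped BigOperators

/-- The dimension of the degree-`k` homogeneous component of `A/K`:
`dim_ℂ A_k − dim_ℂ (K ∩ A_k)`. -/
noncomputable def hdim {ν : ℕ} (K : Ideal (MvPolynomial (Fin ν) ℂ)) (k : ℕ) : ℕ :=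
  Module.finrank ℂ (MvPolynomial.homogeneousSubmodule (Fin ν) ℂ k) -
    Module.finrank ℂ
      (Submodule.restrictScalars ℂ K ⊓ MvPolynomial.homogeneousSubmodule (Fin ν) ℂ k :
        Submodule ℂ (MvPolynomial (Fin ν) ℂ))

/-- A `(ν−2)×ν` complex matrix is of full rank type if every `(ν−2)×(ν−2)` minor is nonzero. -/
def FullRankType (ν : ℕ) (M : Matrix (Fin (ν - 2)) (Fin ν) ℂ) : Prop :=
  ∀ g : Fin (ν - 2) ↪ Fin ν, (M.submatrix id g).det ≠ 0

/-- The ideal `I_M` generated by the `ν−2` linear forms `ℓ_j = Σ_i M_{j,i}·a_i`. -/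
noncomputable def IM {ν : ℕ} (M : Matrix (Fin (ν - 2)) (Fin ν) ℂ) :
    Ideal (MvPolynomial (Fin ν) ℂ) :=
  Ideal.span (Set.range fun j : Fin (ν - 2) =>
    ∑ i, MvPolynomial.C (M j i) * MvPolynomial.X i)

namespace Stmt9Aux

open MvPolynomial

/-! ### Generic facts about homogeneous components -/

instance fdHomog (σ : Type*) [Finite σ] (k : ℕ) :
    FiniteDimensional ℂ (homogeneousSubmodule σ ℂ k) :=
 by
  refine Submodule.finiteDimensional_of_le (S₂ := restrictTotalDegree σ ℂ k) ?_
  intro p hp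
  rw [mem_restrictTotalDegree]
  exact MvPolynomial.IsHomogeneous.totalDegree_le hp

lemma degree_fin2 (d : Fin 2 →₀ ℕ) : d.degree = d 0 + d 1 := by
  show (∑ i ∈ d.support, d i) = d 0 + d 1
  rw [Finset.sum_subset (Finset.subset_univ _)
    (fun x _ hx => Finsupp.notMem_support_iff.mp hx), Fin.sum_univ_two]

/-- the exponent vector `(a, m-a)`. -/
noncomputable def dd (m : ℕ) (a : Fin (m + 1)) : Fin 2 →₀ ℕ :=
  Finsupp.single 0 (a : ℕ) + Finsupp.single 1 (m - a)

lemma dd_apply0 (m : ℕ) (a : Fin (m + 1)) : dd m a 0 = a := by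
  simp [dd, Finsupp.single_apply]

lemma dd_apply1 (m : ℕ) (a : Fin (m + 1)) : dd m a 1 = m - a := by
  simp [dd, Finsupp.single_apply]

lemma dd_degree (m : ℕ) (a : Fin (m + 1)) : (dd m a).degree = m := by
  have := a.isLt
  rw [degree_fin2, dd_apply0, dd_apply1]; omega

lemma dd_inj (m : ℕ) : Function.Injective (dd m) := by
  intro a b h
  have : dd m a 0 = dd m b 0 := by rw [h]
  rw [dd_apply0, dd_apply0] at this
  exact Fin.ext this

noncomputable def phi2 (m : ℕ) :
    (homogeneousSubmodule (Fin 2) ℂ m) →ₗ[ℂ] (Fin (m + 1) → ℂ) where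
  toFun p := fun a => MvPolynomial.coeff (dd m a) p.1
  map_add' p q := by ext a; simp
  map_smul' c p := by ext a; simp

lemma phi2_bij (m : ℕ) : Function.Bijective (phi2 m) := by
  constructor
  · rw [injective_iff_map_eq_zero]
    intro p hp
    have hph : (p : MvPolynomial (Fin 2) ℂ).IsHomogeneous m := p.2
    ext1
    ext d
    simp only [ZeroMemClass.coe_zero, MvPolynomial.coeff_zero]
    by_cases hd : d.degree = m
    · have hd0 : (d 0 : ℕ) ≤ m := by
        rw [degree_fin2] at hd; omega
      have hda : d = dd m ⟨d 0, by omega⟩ := by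
        ext i
        fin_cases i
        · show d 0 = dd m ⟨d 0, by omega⟩ 0
          rw [dd_apply0]
        · show d 1 = dd m ⟨d 0, by omega⟩ 1
          rw [dd_apply1]
          rw [degree_fin2] at hd
          simp only
          omega
      rw [hda]
      exact congrFun hp ⟨d 0, by omega⟩
    · exact hph.coeff_eq_zero hd
  · intro c
    classical
    have hmem : (∑ a : Fin (m + 1), MvPolynomial.monomial (dd m a) (c a)) ∈
        homogeneousSubmodule (Fin 2) ℂ m := by
      rw [mem_homogeneousSubmodule]
      exact MvPolynomial.IsHomogeneous.sum _ _ _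
        (fun a _ => isHomogeneous_monomial _ (dd_degree m a))
    refine ⟨⟨_, hmem⟩, ?_⟩
    ext a
    simp only [phi2, LinearMap.coe_mk, AddHom.coe_mk, MvPolynomial.coeff_sum,
      MvPolynomial.coeff_monomial]
    rw [Finset.sum_eq_single a]
    · simp
    · intro b _ hb
      rw [if_neg (fun h => hb (dd_inj m h))]
    · intro h; exact absurd (Finset.mem_univ a) h

lemma finrank_homog2 (m : ℕ) :
    Module.finrank ℂ (homogeneousSubmodule (Fin 2) ℂ m) = m + 1 := by
  rw [(LinearEquiv.ofBijective (phi2 m) (phi2_bij m)).finrank_eq, Module.finrank_fin_fun]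

/-! ### The construction of the projection `π` -/

variable {ν : ℕ}

/-- The embedding of `Fin (ν-2)` into `Fin ν` given by `castLE`. -/
noncomputable def emb0 (ν : ℕ) : Fin (ν - 2) ↪ Fin ν := Fin.castLEEmb (Nat.sub_le ν 2)

variable (M : Matrix (Fin (ν - 2)) (Fin ν) ℂ)

noncomputable def NN : Matrix (Fin (ν - 2)) (Fin (ν - 2)) ℂ := (M.submatrix id (emb0 ν))⁻¹

noncomputable def PP : Matrix (Fin (ν - 2)) (Fin ν) ℂ := NN M * M

noncomputable def i2 (hν : 3 ≤ ν) : Fin ν := ⟨ν - 2, by omega⟩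
noncomputable def i1 (hν : 3 ≤ ν) : Fin ν := ⟨ν - 1, by omega⟩

variable (hν : 3 ≤ ν)

noncomputable def alp : Fin ν → ℂ := fun i =>
  if h : (i : ℕ) < ν - 2 then -PP M ⟨i, by omega⟩ (i2 hν) else if (i : ℕ) = ν - 2 then 1 else 0

noncomputable def bet : Fin ν → ℂ := fun i =>
  if h : (i : ℕ) < ν - 2 then -PP M ⟨i, by omega⟩ (i1 hν) else if (i : ℕ) = ν - 2 then 0 else 1

noncomputable def LL : Fin ν → MvPolynomial (Fin 2) ℂ := fun i =>
  C (alp M hν i) * X 0 + C (bet M hν i) * X 1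

noncomputable def piM : MvPolynomial (Fin ν) ℂ →ₐ[ℂ] MvPolynomial (Fin 2) ℂ :=
  aeval (LL M hν)

/-- the section `B → A`. -/
noncomputable def sec : MvPolynomial (Fin 2) ℂ →ₐ[ℂ] MvPolynomial (Fin ν) ℂ :=
  aeval (fun b : Fin 2 => if b = 0 then X (i2 hν) else X (i1 hν))

lemma LL_homog (i : Fin ν) : (LL M hν i).IsHomogeneous 1 := by
  exact (isHomogeneous_C_mul_X _ _).add (isHomogeneous_C_mul_X _ _)

lemma piM_homog {p : MvPolynomial (Fin ν) ℂ} {d : ℕ} (hp : p.IsHomogeneous d) :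
    (piM M hν p).IsHomogeneous d := by
  simpa [piM] using hp.aeval (LL M hν) (LL_homog M hν)

/-! ### Splitting sums over `Fin ν` -/

lemma univ_eq : (Finset.univ : Finset (Fin ν)) =
    (Finset.univ.map (emb0 ν)) ∪ {i2 hν, i1 hν} := by
  ext i
  simp only [Finset.mem_univ, true_iff, Finset.mem_union, Finset.mem_map, Finset.mem_insert,
    Finset.mem_singleton]
  by_cases h : (i : ℕ) < ν - 2
  · exact Or.inl ⟨⟨i, h⟩, trivial, Fin.ext rfl⟩
  · right
    have := i.isLt
    rcases (by omega : (i : ℕ) = ν - 2 ∨ (i : ℕ) = ν - 1) with h' | h'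
    · exact Or.inl (Fin.ext h')
    · exact Or.inr (Fin.ext h')

lemma disj_eq : Disjoint (Finset.univ.map (emb0 ν)) ({i2 hν, i1 hν} : Finset (Fin ν)) := by
  rw [Finset.disjoint_left]
  intro a ha' ha
  obtain ⟨t, -, rfl⟩ := Finset.mem_map.mp ha'
  have h1 : ((emb0 ν t : Fin ν) : ℕ) < ν - 2 := t.isLt
  rcases Finset.mem_insert.mp ha with h | h
  · have h2 := congrArg Fin.val h; simp only [i2] at h2; omega
  · have h2 := congrArg Fin.val (Finset.mem_singleton.mp h); simp only [i1] at h2; omega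

lemma i2_ne_i1 : i2 hν ≠ i1 hν := by
  intro h
  have := congrArg Fin.val h
  simp only [i2, i1] at this
  omega

lemma sum_split {E : Type*} [AddCommMonoid E] (g : Fin ν → E) :
    ∑ i, g i = (∑ t, g (emb0 ν t)) + (g (i2 hν) + g (i1 hν)) := by
  rw [univ_eq hν, Finset.sum_union (disj_eq hν), Finset.sum_map,
    Finset.sum_pair (i2_ne_i1 hν)]

/-! ### Values of `alp`, `bet` -/

lemma alp_emb0 (t : Fin (ν - 2)) : alp M hν (emb0 ν t) = -PP M t (i2 hν) := by
  have h : ((emb0 ν t : Fin ν) : ℕ) < ν - 2 := t.isLt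
  simp only [alp, dif_pos h]
  exact congrArg (fun z => -PP M z (i2 hν)) (Fin.ext rfl)

lemma bet_emb0 (t : Fin (ν - 2)) : bet M hν (emb0 ν t) = -PP M t (i1 hν) := by
  have h : ((emb0 ν t : Fin ν) : ℕ) < ν - 2 := t.isLt
  simp only [bet, dif_pos h]
  exact congrArg (fun z => -PP M z (i1 hν)) (Fin.ext rfl)

lemma alp_i2 : alp M hν (i2 hν) = 1 := by
  simp only [alp, i2, dif_neg (lt_irrefl _)]
  simp

lemma bet_i2 : bet M hν (i2 hν) = 0 := by
  simp only [bet, i2, dif_neg (lt_irrefl _)]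
  simp

lemma alp_i1 : alp M hν (i1 hν) = 0 := by
  have h1 : ¬ ((i1 hν : Fin ν) : ℕ) < ν - 2 := by simp only [i1]; omega
  have h2 : ¬ ((i1 hν : Fin ν) : ℕ) = ν - 2 := by simp only [i1]; omega
  simp only [alp, dif_neg h1, if_neg h2]

lemma bet_i1 : bet M hν (i1 hν) = 1 := by
  have h1 : ¬ ((i1 hν : Fin ν) : ℕ) < ν - 2 := by simp only [i1]; omega
  have h2 : ¬ ((i1 hν : Fin ν) : ℕ) = ν - 2 := by simp only [i1]; omega
  simp only [bet, dif_neg h1, if_neg h2]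

/-! ### Matrix identities -/

lemma M0PP (hM : FullRankType ν M) (j : Fin (ν - 2)) (m : Fin ν) :
    ∑ t, M j (emb0 ν t) * PP M t m = M j m := by
  have h1 : M.submatrix id (emb0 ν) * PP M = M := by
    rw [PP, NN, ← Matrix.mul_assoc, Matrix.mul_nonsing_inv _ ((hM (emb0 ν)).isUnit),
      Matrix.one_mul]
  have h2 : (M.submatrix id (emb0 ν) * PP M) j m = M j m := by rw [h1]
  rw [← h2, Matrix.mul_apply]
  rfl

lemma PP_emb0 (hM : FullRankType ν M) (t s : Fin (ν - 2)) :
    PP M t (emb0 ν s) = if t = s then 1 else 0 := by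
  have h1 : NN M * M.submatrix id (emb0 ν) = 1 := by
    rw [NN, Matrix.nonsing_inv_mul _ ((hM (emb0 ν)).isUnit)]
  have h2 : PP M t (emb0 ν s) = (NN M * M.submatrix id (emb0 ν)) t s := by
    rw [PP, Matrix.mul_apply, Matrix.mul_apply]
    rfl
  rw [h2, h1, Matrix.one_apply]

lemma sum_alp (hM : FullRankType ν M) (j : Fin (ν - 2)) : ∑ i, M j i * alp M hν i = 0 := by
  rw [sum_split hν]
  rw [Finset.sum_congr rfl (fun t _ => by rw [alp_emb0, mul_neg])]
  rw [Finset.sum_neg_distrib, M0PP M hM, alp_i2, alp_i1]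
  ring

lemma sum_bet (hM : FullRankType ν M) (j : Fin (ν - 2)) : ∑ i, M j i * bet M hν i = 0 := by
  rw [sum_split hν]
  rw [Finset.sum_congr rfl (fun t _ => by rw [bet_emb0, mul_neg])]
  rw [Finset.sum_neg_distrib, M0PP M hM, bet_i2, bet_i1]
  ring

lemma LL_i2 : LL M hν (i2 hν) = X 0 := by
  rw [LL, alp_i2, bet_i2]; simp

lemma LL_i1 : LL M hν (i1 hν) = X 1 := by
  rw [LL, alp_i1, bet_i1]; simp

/-! ### `π` kills the linear forms -/

lemma piM_ell (hM : FullRankType ν M) (j : Fin (ν - 2)) :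
    piM M hν (∑ i, C (M j i) * X i) = 0 := by
  have h1 : piM M hν (∑ i, C (M j i) * X i) = ∑ i, C (M j i) * LL M hν i := by
    rw [map_sum]
    refine Finset.sum_congr rfl fun i _ => ?_
    rw [map_mul]
    simp [piM, aeval_C, aeval_X]
  rw [h1]
  calc ∑ i, C (M j i) * LL M hν i
      = (∑ i, C (M j i * alp M hν i)) * X 0 + (∑ i, C (M j i * bet M hν i)) * X 1 := by
        simp only [LL, mul_add, ← mul_assoc, ← map_mul, Finset.sum_add_distrib,
          Finset.sum_mul]
    _ = C (∑ i, M j i * alp M hν i) * X 0 + C (∑ i, M j i * bet M hν i) * X 1 := by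
        rw [map_sum, map_sum]
    _ = 0 := by rw [sum_alp M hν hM j, sum_bet M hν hM j]; simp

lemma mem_IM_imp (hM : FullRankType ν M) {p : MvPolynomial (Fin ν) ℂ} (hp : p ∈ IM M) :
    piM M hν p = 0 := by
  have hle : IM M ≤ RingHom.ker (piM M hν).toRingHom := by
    rw [IM, Ideal.span_le]
    rintro q ⟨j, rfl⟩
    exact RingHom.mem_ker.mpr (piM_ell M hν hM j)
  exact RingHom.mem_ker.mp (hle hp)

/-! ### `ker π ⊆ I_M` -/

lemma sumPP_mem (t : Fin (ν - 2)) :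
    (∑ m, C (PP M t m) * X m : MvPolynomial (Fin ν) ℂ) ∈ IM M := by
  have hPP : ∀ m, PP M t m = ∑ j, NN M t j * M j m := fun m => Matrix.mul_apply
  have h : (∑ m, C (PP M t m) * X m : MvPolynomial (Fin ν) ℂ)
      = ∑ j, C (NN M t j) * ∑ m, C (M j m) * X m := by
    symm
    calc ∑ j, C (NN M t j) * ∑ m, C (M j m) * X m
        = ∑ j, ∑ m, C (NN M t j * M j m) * X m := by
          refine Finset.sum_congr rfl fun j _ => ?_
          rw [Finset.mul_sum]
          exact Finset.sum_congr rfl fun m _ => by rw [map_mul, mul_assoc]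
      _ = ∑ m, ∑ j, C (NN M t j * M j m) * X m := Finset.sum_comm
      _ = ∑ m, C (PP M t m) * X m := by
          refine Finset.sum_congr rfl fun m _ => ?_
          rw [← Finset.sum_mul, ← map_sum]
          exact congrArg (fun z => C z * X m) (hPP m).symm
  rw [h]
  exact Submodule.sum_mem _ fun j _ =>
    Ideal.mul_mem_left _ _ (Ideal.subset_span ⟨j, rfl⟩)

lemma gen_sub (hM : FullRankType ν M) (i : Fin ν) :
    (X i : MvPolynomial (Fin ν) ℂ) -
      (C (alp M hν i) * X (i2 hν) + C (bet M hν i) * X (i1 hν)) ∈ IM M := by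
  by_cases h : (i : ℕ) < ν - 2
  · set t : Fin (ν - 2) := ⟨(i : ℕ), h⟩ with ht
    have hi : i = emb0 ν t := Fin.ext rfl
    rw [hi, alp_emb0, bet_emb0]
    have hexp : (∑ m, C (PP M t m) * X m : MvPolynomial (Fin ν) ℂ)
        = X (emb0 ν t) + (C (PP M t (i2 hν)) * X (i2 hν) + C (PP M t (i1 hν)) * X (i1 hν)) := by
      rw [sum_split hν (fun m => C (PP M t m) * X m)]
      congr 1
      have hterm : ∀ s : Fin (ν - 2),
          C (PP M t (emb0 ν s)) * X (emb0 ν s) =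
            if t = s then X (emb0 ν s) else 0 := by
        intro s
        rw [PP_emb0 M hM]
        split_ifs <;> simp
      rw [Finset.sum_congr rfl (fun s _ => hterm s), Finset.sum_ite_eq]
      simp
    have hmem := sumPP_mem M t
    rw [hexp] at hmem
    rw [map_neg, map_neg]
    convert hmem using 1
    ring
  · have hlt := i.isLt
    rcases (by omega : (i : ℕ) = ν - 2 ∨ (i : ℕ) = ν - 1) with h' | h'
    · have hi : i = i2 hν := Fin.ext h'
      rw [hi, alp_i2, bet_i2]
      simp
    · have hi : i = i1 hν := Fin.ext h'
      rw [hi, alp_i1, bet_i1]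
      simp

lemma sec_piM_X (i : Fin ν) :
    sec hν (piM M hν (X i)) = C (alp M hν i) * X (i2 hν) + C (bet M hν i) * X (i1 hν) := by
  simp [piM, sec, LL]

lemma sub_rho_mem (hM : FullRankType ν M) (p : MvPolynomial (Fin ν) ℂ) :
    p - sec hν (piM M hν p) ∈ IM M := by
  induction p using MvPolynomial.induction_on with
  | C c => simp only [piM, sec, aeval_C]; simp
  | add p q hp hq =>
    have := add_mem hp hq
    convert this using 1
    rw [map_add, map_add]
    ring
  | mul_X p i hp =>
    have hXi : (X i : MvPolynomial (Fin ν) ℂ) - sec hν (piM M hν (X i)) ∈ IM M := by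
      rw [sec_piM_X]
      exact gen_sub M hν hM i
    have key : p * X i - sec hν (piM M hν (p * X i)) =
        (p - sec hν (piM M hν p)) * X i +
          sec hν (piM M hν p) * (X i - sec hν (piM M hν (X i))) := by
      rw [map_mul, map_mul]
      ring
    rw [key]
    exact add_mem (Ideal.mul_mem_right _ _ hp) (Ideal.mul_mem_left _ _ hXi)

lemma ker_eq_IM (hM : FullRankType ν M) (p : MvPolynomial (Fin ν) ℂ) :
    piM M hν p = 0 ↔ p ∈ IM M := by
  constructor
  · intro h
    have := sub_rho_mem M hν hM p
    rwa [h, map_zero, sub_zero] at this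
  · exact fun h => mem_IM_imp M hν hM h

lemma piM_sec (q : MvPolynomial (Fin 2) ℂ) : piM M hν (sec hν q) = q := by
  induction q using MvPolynomial.induction_on with
  | C c => simp [piM, sec]
  | add p q hp hq => rw [map_add, map_add, hp, hq]
  | mul_X q b hq =>
    rw [map_mul, map_mul, hq]
    refine congrArg (q * ·) ?_
    have hsec : sec hν (X b) = if b = 0 then X (i2 hν) else X (i1 hν) := aeval_X _ b
    by_cases hb : b = 0
    · subst hb
      rw [hsec, if_pos rfl]
      rw [show piM M hν (X (i2 hν)) = LL M hν (i2 hν) from aeval_X _ _, LL_i2]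
    · have hb1 : b = 1 := by
        have := b.isLt
        refine Fin.ext ?_
        have hne : (b : ℕ) ≠ 0 := fun hh => hb (Fin.ext hh)
        omega
      subst hb1
      rw [hsec, if_neg hb]
      rw [show piM M hν (X (i1 hν)) = LL M hν (i1 hν) from aeval_X _ _, LL_i1]

/-! ### Nonvanishing of the linear forms -/

/-- An embedding of `Fin (ν-2)` into `Fin ν` avoiding a given index `c`. -/
noncomputable def embAvoid (c : Fin ν) : Fin (ν - 2) ↪ Fin ν where
  toFun s := Fin.cast (by omega : ν - 1 + 1 = ν)
    ((Fin.cast (by omega : ν = ν - 1 + 1) c).succAbove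
      (Fin.castLE (by omega) s))
  inj' := by
    intro a b hab
    have h1 := Fin.cast_injective _ hab
    have h2 := Fin.succAbove_right_injective h1
    exact Fin.castLE_injective _ h2

lemma embAvoid_ne (c : Fin ν) (s : Fin (ν - 2)) : embAvoid hν c s ≠ c := by
  intro h
  apply Fin.succAbove_ne (Fin.cast (by omega : ν = ν - 1 + 1) c)
    (Fin.castLE (by omega) s)
  refine Fin.ext ?_
  have hval := congrArg Fin.val h
  exact hval

lemma LL_ne_zero (hM : FullRankType ν M) (i : Fin ν) : LL M hν i ≠ 0 := by
  intro h0
  have ha : alp M hν i = 0 := by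
    have := congrArg (eval ![1, 0]) h0
    simpa [LL] using this
  have hb : bet M hν i = 0 := by
    have := congrArg (eval ![0, 1]) h0
    simpa [LL] using this
  by_cases h : (i : ℕ) < ν - 2
  · set t : Fin (ν - 2) := ⟨(i : ℕ), h⟩ with htdef
    have hi : i = emb0 ν t := Fin.ext rfl
    rw [hi, alp_emb0, neg_eq_zero] at ha
    rw [hi, bet_emb0, neg_eq_zero] at hb
    set c : Fin ν := emb0 ν t with hcdef
    have hall : ∀ m : Fin ν, m ≠ c → PP M t m = 0 := by
      intro m hm
      by_cases hm2 : (m : ℕ) < ν - 2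
      · have hms : m = emb0 ν (⟨(m : ℕ), hm2⟩ : Fin (ν - 2)) := Fin.ext rfl
        rw [hms, PP_emb0 M hM, if_neg]
        intro hts
        exact hm (by rw [hms, ← hts])
      · have := m.isLt
        rcases (by omega : (m : ℕ) = ν - 2 ∨ (m : ℕ) = ν - 1) with h' | h'
        · rw [show m = i2 hν from Fin.ext h']; exact ha
        · rw [show m = i1 hν from Fin.ext h']; exact hb
    have hc1 : PP M t c = 1 := by rw [hcdef, PP_emb0 M hM, if_pos rfl]
    set Q := M.submatrix id (embAvoid hν c) with hQ
    have hdet : IsUnit Q.det := (hM (embAvoid hν c)).isUnit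
    have hvm : Matrix.vecMul (fun j => NN M t j) Q = 0 := by
      funext s
      have : Matrix.vecMul (fun j => NN M t j) Q s = ∑ j, NN M t j * M j (embAvoid hν c s) := by
        simp [Matrix.vecMul, dotProduct, hQ, Matrix.submatrix_apply]
      rw [this, ← Matrix.mul_apply]
      exact hall _ (embAvoid_ne hν c s)
    have hzero : (fun j => NN M t j) = 0 := by
      have h1 : (fun j => NN M t j) = Matrix.vecMul (fun j => NN M t j) (Q * Q⁻¹) := by
        rw [Matrix.mul_nonsing_inv _ hdet, Matrix.vecMul_one]
      rw [h1, ← Matrix.vecMul_vecMul, hvm, Matrix.zero_vecMul]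
    have : PP M t c = 0 := by
      rw [PP, Matrix.mul_apply]
      refine Finset.sum_eq_zero fun j _ => ?_
      rw [show NN M t j = 0 from congrFun hzero j, zero_mul]
    rw [this] at hc1
    exact zero_ne_one hc1
  · have hlt := i.isLt
    rcases (by omega : (i : ℕ) = ν - 2 ∨ (i : ℕ) = ν - 1) with h' | h'
    · rw [show i = i2 hν from Fin.ext h', alp_i2] at ha
      exact one_ne_zero ha
    · rw [show i = i1 hν from Fin.ext h', bet_i1] at hb
      exact one_ne_zero hb

/-! ### Homogeneous components and spans -/

attribute [local instance] MvPolynomial.gradedAlgebra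

lemma hc_span {σ : Type*} (G : Set (MvPolynomial σ ℂ)) (hG : ∀ p ∈ G, ∃ d, p.IsHomogeneous d)
    {x : MvPolynomial σ ℂ} (hx : x ∈ Ideal.span G) (d : ℕ) :
    homogeneousComponent d x ∈ Ideal.span G := by
  have hI : (Ideal.span G).IsHomogeneous (homogeneousSubmodule σ ℂ) :=
    Ideal.homogeneous_span _ _ (fun p hp => by
      obtain ⟨e, he⟩ := hG p hp
      exact ⟨e, (mem_homogeneousSubmodule e p).mpr he⟩)
  have h2 := hI d hx
  have h3 : ((DirectSum.decompose (homogeneousSubmodule σ ℂ) x d : homogeneousSubmodule σ ℂ d) :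
      MvPolynomial σ ℂ) = homogeneousComponent d x :=
    MvPolynomial.decomposition.decompose'_apply x d
  rwa [h3] at h2

lemma hc_algmap {σ τ : Type*} (f : MvPolynomial σ ℂ →ₐ[ℂ] MvPolynomial τ ℂ)
    (hf : ∀ p : MvPolynomial σ ℂ, ∀ d : ℕ, p.IsHomogeneous d → (f p).IsHomogeneous d)
    (p : MvPolynomial σ ℂ) (d : ℕ) :
    homogeneousComponent d (f p) = f (homogeneousComponent d p) := by
  conv_lhs => rw [← sum_homogeneousComponent p]
  rw [map_sum, map_sum]
  rw [Finset.sum_congr rfl (fun i _ => homogeneousComponent_of_mem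
    ((mem_homogeneousSubmodule _ _).mpr (hf _ i (homogeneousComponent_isHomogeneous i p))))]
  rw [Finset.sum_ite_eq]
  split_ifs with hd
  · rfl
  · rw [homogeneousComponent_eq_zero, map_zero]
    simp only [Finset.mem_range, not_lt] at hd
    omega

lemma hc_mul_left {σ : Type*} (u y : MvPolynomial σ ℂ) {n : ℕ} (hu : u.IsHomogeneous n) (d : ℕ) :
    homogeneousComponent (n + d) (u * y) = u * homogeneousComponent d y := by
  conv_lhs => rw [← sum_homogeneousComponent y]
  rw [Finset.mul_sum, map_sum]
  rw [Finset.sum_congr rfl (fun i _ => homogeneousComponent_of_mem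
    ((mem_homogeneousSubmodule _ _).mpr (hu.mul (homogeneousComponent_isHomogeneous i y))))]
  rw [Finset.sum_congr rfl (fun i _ => if_congr (show n + d = n + i ↔ d = i by omega) rfl rfl)]
  rw [Finset.sum_ite_eq]
  split_ifs with hd
  · rfl
  · rw [homogeneousComponent_eq_zero, mul_zero]
    simp only [Finset.mem_range, not_lt] at hd
    omega

/-! ### Rank computations -/

lemma finrank_map_add {V W : Type*} [AddCommGroup V] [Module ℂ V] [AddCommGroup W] [Module ℂ W]
    (f : V →ₗ[ℂ] W) (p : Submodule ℂ V) [FiniteDimensional ℂ p] :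
    Module.finrank ℂ p =
      Module.finrank ℂ (LinearMap.ker f ⊓ p : Submodule ℂ V) +
        Module.finrank ℂ (Submodule.map f p) := by
  have h1 := LinearMap.finrank_range_add_finrank_ker (f ∘ₗ p.subtype)
  have hrange : LinearMap.range (f ∘ₗ p.subtype) = Submodule.map f p := by
    rw [LinearMap.range_comp, Submodule.range_subtype]
  have hker : LinearMap.ker (f ∘ₗ p.subtype) =
      Submodule.comap p.subtype (LinearMap.ker f ⊓ p) := by
    rw [LinearMap.ker_comp, Submodule.comap_inf, Submodule.comap_subtype_self, inf_top_eq]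
  have he : Module.finrank ℂ (Submodule.comap p.subtype (LinearMap.ker f ⊓ p)) =
      Module.finrank ℂ (LinearMap.ker f ⊓ p : Submodule ℂ V) :=
    (Submodule.comapSubtypeEquivOfLe inf_le_right).finrank_eq
  rw [hrange, hker, he] at h1
  omega

lemma key (hM : FullRankType ν M) (K : Ideal (MvPolynomial (Fin ν) ℂ))
    (hhom : ∀ x ∈ K, ∀ d : ℕ, homogeneousComponent d x ∈ K)
    (hIK : IM M ≤ K) (k : ℕ) :
    hdim K k = (k + 1) -
      Module.finrank ℂ (Submodule.restrictScalars ℂ (Ideal.map (piM M hν) K) ⊓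
        homogeneousSubmodule (Fin 2) ℂ k : Submodule ℂ (MvPolynomial (Fin 2) ℂ)) := by
  classical
  set πl := (piM M hν).toLinearMap with hπl
  have hkerπ : LinearMap.ker πl = Submodule.restrictScalars ℂ (IM M) := by
    ext p
    rw [LinearMap.mem_ker]
    exact ker_eq_IM M hν hM p
  have h1 := finrank_map_add πl (homogeneousSubmodule (Fin ν) ℂ k)
  have hmapAk : Submodule.map πl (homogeneousSubmodule (Fin ν) ℂ k) =
      homogeneousSubmodule (Fin 2) ℂ k := by
    apply le_antisymm
    · rintro q ⟨p, hp, rfl⟩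
      exact piM_homog M hν ((mem_homogeneousSubmodule _ _).mp hp)
    · intro q hq
      refine ⟨sec hν q, ?_, piM_sec M hν q⟩
      have hhs : ∀ b : Fin 2,
          ((if b = 0 then X (i2 hν) else X (i1 hν)) : MvPolynomial (Fin ν) ℂ).IsHomogeneous 1 := by
        intro b; split_ifs <;> exact isHomogeneous_X _ _
      have := ((mem_homogeneousSubmodule _ _).mp hq).aeval _ hhs
      simpa [sec] using this
  set W : Submodule ℂ (MvPolynomial (Fin ν) ℂ) :=
    Submodule.restrictScalars ℂ K ⊓ homogeneousSubmodule (Fin ν) ℂ k with hW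
  have hWfd : FiniteDimensional ℂ W := Submodule.finiteDimensional_of_le inf_le_right
  have h2 := finrank_map_add πl W
  have hkerW : LinearMap.ker πl ⊓ W =
      LinearMap.ker πl ⊓ homogeneousSubmodule (Fin ν) ℂ k := by
    have hs : LinearMap.ker πl ⊓ Submodule.restrictScalars ℂ K = LinearMap.ker πl :=
      inf_eq_left.mpr (by rw [hkerπ]; exact fun x hx => hIK hx)
    rw [hW, ← inf_assoc, hs]
  have hmapW : Submodule.map πl W = Submodule.restrictScalars ℂ (Ideal.map (piM M hν) K) ⊓
      homogeneousSubmodule (Fin 2) ℂ k := by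
    apply le_antisymm
    · rintro q ⟨p, ⟨hpK, hpA⟩, rfl⟩
      exact ⟨Ideal.mem_map_of_mem _ hpK,
        piM_homog M hν ((mem_homogeneousSubmodule _ _).mp hpA)⟩
    · rintro q ⟨hq1, hq2⟩
      obtain ⟨x, hxK, hxq⟩ := (Ideal.mem_map_iff_of_surjective (piM M hν)
        (fun b => ⟨sec hν b, piM_sec M hν b⟩)).mp hq1
      refine ⟨homogeneousComponent k x, ⟨hhom x hxK k, homogeneousComponent_mem k x⟩, ?_⟩
      show piM M hν (homogeneousComponent k x) = q
      rw [← hc_algmap (piM M hν) (fun p d hp => piM_homog M hν hp) x k, hxq,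
        homogeneousComponent_of_mem hq2, if_pos rfl]
  rw [show hdim K k = Module.finrank ℂ (homogeneousSubmodule (Fin ν) ℂ k) -
    Module.finrank ℂ W from rfl]
  rw [hmapAk, finrank_homog2] at h1
  rw [hkerW, hmapW] at h2
  omega

/-! ### The degree shift in two variables -/

lemma span_mul_inf (u : MvPolynomial (Fin 2) ℂ) (n : ℕ) (hu : u.IsHomogeneous n)
    (G : Set (MvPolynomial (Fin 2) ℂ)) (hG : ∀ p ∈ G, ∃ d, p.IsHomogeneous d)
    (k : ℕ) (hk : n ≤ k) :
    (Submodule.restrictScalars ℂ (Ideal.span ((fun g => u * g) '' G)) ⊓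
        homogeneousSubmodule (Fin 2) ℂ k : Submodule ℂ (MvPolynomial (Fin 2) ℂ))
      = Submodule.map (LinearMap.mulLeft ℂ u)
        (Submodule.restrictScalars ℂ (Ideal.span G) ⊓
          homogeneousSubmodule (Fin 2) ℂ (k - n)) := by
  have hmul : ∀ y ∈ Ideal.span G, u * y ∈ Ideal.span ((fun g => u * g) '' G) := by
    intro y hy
    induction hy using Submodule.span_induction with
    | mem x hx => exact Ideal.subset_span ⟨x, hx, rfl⟩
    | zero => rw [mul_zero]; exact zero_mem _
    | add a b _ _ ha hb => rw [mul_add]; exact add_mem ha hb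
    | smul a x _ hx =>
      rw [smul_eq_mul, show u * (a * x) = a * (u * x) from by ring]
      exact Ideal.mul_mem_left _ _ hx
  have hdiv : ∀ x ∈ Ideal.span ((fun g => u * g) '' G), ∃ y ∈ Ideal.span G, x = u * y := by
    intro x hx
    induction hx using Submodule.span_induction with
    | mem x hx => obtain ⟨g, hg, rfl⟩ := hx; exact ⟨g, Ideal.subset_span hg, rfl⟩
    | zero => exact ⟨0, zero_mem _, by rw [mul_zero]⟩
    | add a b _ _ ha hb =>
      obtain ⟨y1, hy1, rfl⟩ := ha; obtain ⟨y2, hy2, rfl⟩ := hb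
      exact ⟨y1 + y2, add_mem hy1 hy2, by ring⟩
    | smul a x _ hx =>
      obtain ⟨y, hy, rfl⟩ := hx
      exact ⟨a * y, Ideal.mul_mem_left _ _ hy, by rw [smul_eq_mul]; ring⟩
  apply le_antisymm
  · rintro x ⟨hx1, hx2⟩
    obtain ⟨y, hy, rfl⟩ := hdiv x hx1
    refine ⟨homogeneousComponent (k - n) y,
      ⟨hc_span G hG hy (k - n), homogeneousComponent_mem _ _⟩, ?_⟩
    show u * homogeneousComponent (k - n) y = u * y
    rw [← hc_mul_left u y hu (k - n), Nat.add_sub_cancel' hk,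
      homogeneousComponent_of_mem hx2, if_pos rfl]
  · rintro x ⟨z, ⟨hz1, hz2⟩, rfl⟩
    constructor
    · exact hmul z hz1
    · have h := hu.mul ((mem_homogeneousSubmodule _ _).mp hz2)
      rw [Nat.add_sub_cancel' hk] at h
      exact h

lemma shift_finrank (u : MvPolynomial (Fin 2) ℂ) (n : ℕ) (hu : u.IsHomogeneous n) (hu0 : u ≠ 0)
    (G : Set (MvPolynomial (Fin 2) ℂ)) (hG : ∀ p ∈ G, ∃ d, p.IsHomogeneous d)
    (k : ℕ) (hk : n ≤ k) :
    Module.finrank ℂ (Submodule.restrictScalars ℂ (Ideal.span ((fun g => u * g) '' G)) ⊓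
        homogeneousSubmodule (Fin 2) ℂ k : Submodule ℂ (MvPolynomial (Fin 2) ℂ))
      = Module.finrank ℂ (Submodule.restrictScalars ℂ (Ideal.span G) ⊓
          homogeneousSubmodule (Fin 2) ℂ (k - n) : Submodule ℂ (MvPolynomial (Fin 2) ℂ)) := by
  rw [span_mul_inf u n hu G hG k hk]
  have hinj : Function.Injective (LinearMap.mulLeft ℂ u) := by
    intro a b hab
    exact mul_left_cancel₀ hu0 hab
  exact ((Submodule.restrictScalars ℂ (Ideal.span G) ⊓
    homogeneousSubmodule (Fin 2) ℂ (k - n)).equivMapOfInjective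
      (LinearMap.mulLeft ℂ u) hinj).symm.finrank_eq

lemma prodX_homog {m : ℕ} (s : Finset (Fin m)) :
    (∏ i ∈ s, X i : MvPolynomial (Fin m) ℂ).IsHomogeneous s.card := by
  have := MvPolynomial.IsHomogeneous.prod s (fun i => (X i : MvPolynomial (Fin m) ℂ))
    (fun _ => 1) (fun i _ => isHomogeneous_X ℂ i)
  simpa using this

lemma ell_homog (j : Fin (ν - 2)) :
    (∑ i, C (M j i) * X i : MvPolynomial (Fin ν) ℂ).IsHomogeneous 1 :=
  MvPolynomial.IsHomogeneous.sum _ _ _ (fun i _ => isHomogeneous_C_mul_X _ _)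

end Stmt9Aux

theorem stmt9 (ν : ℕ) (hν : 3 ≤ ν) (M : Matrix (Fin (ν - 2)) (Fin ν) ℂ)
    (hM : FullRankType ν M) (S : Finset (Fin ν))
    (G' : Finset (MvPolynomial (Fin ν) ℂ)) (hG'ne : G'.Nonempty)
    (hG'sq : ∀ p ∈ G', ∃ T : Finset (Fin ν), T ⊆ Sᶜ ∧ p = ∏ i ∈ T, MvPolynomial.X i)
    (k : ℕ) (hk : S.card ≤ k) :
    hdim (Ideal.span ((fun g => (∏ i ∈ S, MvPolynomial.X i) * g) ''
        (↑G' : Set (MvPolynomial (Fin ν) ℂ))) + IM M) k =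
      hdim (Ideal.span (↑G' : Set (MvPolynomial (Fin ν) ℂ)) + IM M) (k - S.card) + S.card := by
  classical
  open MvPolynomial Stmt9Aux in
  set n := S.card with hn
  set u : MvPolynomial (Fin ν) ℂ := ∏ i ∈ S, X i with hu
  have hu_homog : u.IsHomogeneous n := prodX_homog S
  set π := piM M hν with hπ
  set ubar := π u with hubar
  set Gbar : Set (MvPolynomial (Fin 2) ℂ) := π '' ↑G' with hGbar
  -- the two ideals
  set K : Ideal (MvPolynomial (Fin ν) ℂ) :=
    Ideal.span ((fun g => u * g) '' ↑G') + IM M with hK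
  set K' : Ideal (MvPolynomial (Fin ν) ℂ) := Ideal.span (↑G' : Set _) + IM M with hK'
  -- homogeneity of generators
  have hGhom : ∀ g ∈ (↑G' : Set (MvPolynomial (Fin ν) ℂ)), ∃ d, g.IsHomogeneous d := by
    intro g hg
    obtain ⟨T, -, rfl⟩ := hG'sq g hg
    exact ⟨T.card, prodX_homog T⟩
  have hKrw : K = Ideal.span (((fun g => u * g) '' ↑G') ∪
      Set.range fun j : Fin (ν - 2) => ∑ i, C (M j i) * X i) := by
    rw [hK, IM, Ideal.span_union, Submodule.add_eq_sup]
  have hK'rw : K' = Ideal.span ((↑G' : Set (MvPolynomial (Fin ν) ℂ)) ∪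
      Set.range fun j : Fin (ν - 2) => ∑ i, C (M j i) * X i) := by
    rw [hK', IM, Ideal.span_union, Submodule.add_eq_sup]
  have hKgens : ∀ p ∈ (((fun g => u * g) '' ↑G') ∪
      Set.range fun j : Fin (ν - 2) => ∑ i, C (M j i) * X i), ∃ d, p.IsHomogeneous d := by
    rintro p (⟨g, hg, rfl⟩ | ⟨j, rfl⟩)
    · obtain ⟨d, hd⟩ := hGhom g hg
      exact ⟨n + d, hu_homog.mul hd⟩
    · exact ⟨1, ell_homog M j⟩
  have hK'gens : ∀ p ∈ ((↑G' : Set (MvPolynomial (Fin ν) ℂ)) ∪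
      Set.range fun j : Fin (ν - 2) => ∑ i, C (M j i) * X i), ∃ d, p.IsHomogeneous d := by
    rintro p (hp | ⟨j, rfl⟩)
    · exact hGhom p hp
    · exact ⟨1, ell_homog M j⟩
  have hKhom : ∀ x ∈ K, ∀ d : ℕ, homogeneousComponent d x ∈ K := by
    intro x hx d
    rw [hKrw] at hx ⊢
    exact hc_span _ hKgens hx d
  have hK'hom : ∀ x ∈ K', ∀ d : ℕ, homogeneousComponent d x ∈ K' := by
    intro x hx d
    rw [hK'rw] at hx ⊢
    exact hc_span _ hK'gens hx d
  have hIMK : IM M ≤ K := by rw [hK, Submodule.add_eq_sup]; exact le_sup_right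
  have hIMK' : IM M ≤ K' := by rw [hK', Submodule.add_eq_sup]; exact le_sup_right
  -- images of the ideals
  have hmapIM : Ideal.map π (IM M) = ⊥ := by
    rw [IM, Ideal.map_span]
    rw [← le_bot_iff, Ideal.span_le]
    rintro y ⟨x, ⟨j, rfl⟩, rfl⟩
    exact Ideal.mem_bot.mpr (piM_ell M hν hM j)
  have hmapK : Ideal.map π K = Ideal.span ((fun q => ubar * q) '' Gbar) := by
    rw [hK, Submodule.add_eq_sup, Ideal.map_sup, hmapIM, sup_bot_eq, Ideal.map_span]
    congr 1
    rw [hGbar, ← Set.image_comp, ← Set.image_comp]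
    exact Set.image_congr' (fun g => map_mul π u g)
  have hmapK' : Ideal.map π K' = Ideal.span Gbar := by
    rw [hK', Submodule.add_eq_sup, Ideal.map_sup, hmapIM, sup_bot_eq, Ideal.map_span]
  -- properties of ubar and Gbar
  have hubar_homog : ubar.IsHomogeneous n := piM_homog M hν hu_homog
  have hubar_ne : ubar ≠ 0 := by
    rw [hubar, hu, map_prod]
    rw [Finset.prod_ne_zero_iff]
    intro i _
    rw [show π (X i) = LL M hν i from aeval_X _ _]
    exact LL_ne_zero M hν hM i
  have hGbarhom : ∀ q ∈ Gbar, ∃ d, q.IsHomogeneous d := by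
    rintro q ⟨g, hg, rfl⟩
    obtain ⟨d, hd⟩ := hGhom g hg
    exact ⟨d, piM_homog M hν hd⟩
  -- apply the key lemma
  have hkey1 := key M hν hM K hKhom hIMK k
  have hkey2 := key M hν hM K' hK'hom hIMK' (k - n)
  rw [hmapK] at hkey1
  rw [hmapK'] at hkey2
  rw [shift_finrank ubar n hubar_homog hubar_ne Gbar hGbarhom k hk] at hkey1
  set c := Module.finrank ℂ (Submodule.restrictScalars ℂ (Ideal.span Gbar) ⊓
    homogeneousSubmodule (Fin 2) ℂ (k - n) : Submodule ℂ (MvPolynomial (Fin 2) ℂ)) with hc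
  have hcle : c ≤ k - n + 1 := by
    rw [hc, ← finrank_homog2 (k - n)]
    exact Submodule.finrank_mono inf_le_right
  rw [hkey1, hkey2]
  omega
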